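/- Let (g_n)_{n≥1} be a sequence in L¹[0,1] with ‖g_n‖₁ = 1 for all n and pairwise disjoint supports. For t ∈ (1,2), let C_t := { s₁(t−1)g₁ + Σ_{n≥2} s_n g_n : s_n ≥ 0 for all n, Σ_{n≥1} s_n = 1 } and define T : C_t → C_t by T( s₁(t−1)g₁ + Σ_{n≥2} s_n g_n ) = Σ_{n≥1} s_n g_{n+1}. Then for all f, g ∈ C_t and all n ∈ ℕ, ‖Tⁿf − Tⁿg‖₁ ≤ (2/t)·‖f − g‖₁; moreover, for f = (t−1)g₁ and g = g₂ one has ‖f − g‖₁ = t and ‖Tⁿf − Tⁿg‖₁ = 2 = (2/t)·‖f − g‖₁ for all n ≥ 1, so that the uniform Lipschitz constant 2/t is attained and S(T) := liminf_n (|T| + |T²| + ⋯ + |Tⁿ|)/n = 2/t, where |Tᵏ| denotes the exact Lipschitz constant of Tᵏ on C_t. -/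

import Mathlib

open MeasureTheory Filter Topology

/-- Lebesgue measure on `[0,1]`. -/
noncomputable def μ01 : Measure ℝ := volume.restrict (Set.Icc 0 1)

instance : IsFiniteMeasure μ01 := by
  constructor
  simp [μ01, Real.volume_Icc]

/-- The set `C_t = { s₁(t-1)g₁ + Σ_{n≥2} s_n g_n : s_n ≥ 0, Σ s_n = 1 }` (here the sequence
`g` is indexed from `0`, so `g 0` plays the role of `g₁`). -/
noncomputable def Ct (g : ℕ → Lp ℝ 1 μ01) (t : ℝ) : Set (Lp ℝ 1 μ01) :=
  {f | ∃ s : ℕ → ℝ, (∀ n, 0 ≤ s n) ∧ (∑' n, s n) = 1 ∧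
    f = ((t - 1) * s 0) • g 0 + ∑' n : ℕ, s (n + 1) • g (n + 1)}

/-- The exact Lipschitz constant of `T^[k]` on `C_t`. -/
noncomputable def exactLip (g : ℕ → Lp ℝ 1 μ01) (t : ℝ)
    (T : Lp ℝ 1 μ01 → Lp ℝ 1 μ01) (k : ℕ) : ℝ :=
  sSup {q : ℝ | ∃ f ∈ Ct g t, ∃ h ∈ Ct g t, f ≠ h ∧ q = ‖T^[k] f - T^[k] h‖ / ‖f - h‖}

lemma abs_sum_of_disj (u a : ℕ → ℝ)
    (h : ∀ m n, m ≠ n → u m = 0 ∨ u n = 0) (s : Finset ℕ) :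
    |∑ n ∈ s, a n * u n| = ∑ n ∈ s, |a n| * |u n| := by
  induction s using Finset.induction with
  | empty => simp
  | @insert m s hm ih =>
    rw [Finset.sum_insert hm, Finset.sum_insert hm]
    by_cases hu : u m = 0
    · simp [hu, ih]
    · have hz : ∀ n ∈ s, u n = 0 := fun n hn => by
        rcases h m n (fun e => hm (e ▸ hn)) with h1 | h2
        · exact absurd h1 hu
        · exact h2
      have h1 : ∑ n ∈ s, a n * u n = 0 :=
        Finset.sum_eq_zero fun n hn => by rw [hz n hn, mul_zero]
      have h2 : ∑ n ∈ s, |a n| * |u n| = 0 :=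
        Finset.sum_eq_zero fun n hn => by rw [hz n hn, abs_zero, mul_zero]
      rw [h1, h2, add_zero, add_zero, abs_mul]

lemma coeFn_sum_smul (G : ℕ → Lp ℝ 1 μ01) (a : ℕ → ℝ) (s : Finset ℕ) :
    (↑↑(∑ n ∈ s, a n • G n) : ℝ → ℝ) =ᵐ[μ01] fun x => ∑ n ∈ s, a n * G n x := by
  induction s using Finset.induction with
  | empty => simp only [Finset.sum_empty]; exact Lp.coeFn_zero (E := ℝ) (p := 1) (μ := μ01)
  | @insert m s hm ih =>
    rw [Finset.sum_insert hm]
    filter_upwards [Lp.coeFn_add (a m • G m) (∑ n ∈ s, a n • G n),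
      Lp.coeFn_smul (a m) (G m), ih] with x h1 h2 h3
    rw [h1]
    simp only [Pi.add_apply, h2, h3, Pi.smul_apply, smul_eq_mul]
    rw [Finset.sum_insert hm]

lemma norm_finsum_disj (G : ℕ → Lp ℝ 1 μ01) (hG1 : ∀ n, ‖G n‖ = 1)
    (hGd : ∀ m n : ℕ, m ≠ n → ∀ᵐ x ∂μ01, (G m : ℝ → ℝ) x = 0 ∨ (G n : ℝ → ℝ) x = 0)
    (a : ℕ → ℝ) (s : Finset ℕ) :
    ‖∑ n ∈ s, a n • G n‖ = ∑ n ∈ s, |a n| := by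
  have hae : ∀ᵐ x ∂μ01, ∀ m n : ℕ, m ≠ n → (G m : ℝ → ℝ) x = 0 ∨ (G n : ℝ → ℝ) x = 0 := by
    rw [ae_all_iff]; intro m
    rw [ae_all_iff]; intro n
    by_cases h : m = n
    · simp [h]
    · filter_upwards [hGd m n h] with x hx _ using hx
  rw [L1.norm_eq_integral_norm]
  have key : ∫ x, ‖(∑ n ∈ s, a n • G n : Lp ℝ 1 μ01) x‖ ∂μ01
      = ∫ x, ∑ n ∈ s, |a n| * ‖(G n : ℝ → ℝ) x‖ ∂μ01 := by
    apply integral_congr_ae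
    filter_upwards [coeFn_sum_smul G a s, hae] with x h1 h2
    rw [h1]
    simpa [Real.norm_eq_abs] using
      abs_sum_of_disj (fun n => (G n : ℝ → ℝ) x) a (fun m n h => h2 m n h) s
  rw [key, integral_finset_sum]
  · refine Finset.sum_congr rfl fun n _ => ?_
    rw [integral_const_mul, ← L1.norm_eq_integral_norm, hG1, mul_one]
  · intro n _
    exact ((L1.integrable_coeFn (G n)).norm).const_mul _

lemma summable_smul_G (G : ℕ → Lp ℝ 1 μ01) (hG1 : ∀ n, ‖G n‖ = 1)
    (a : ℕ → ℝ) (ha : Summable a) : Summable (fun n => a n • G n) := by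
  apply Summable.of_norm
  simpa [norm_smul, hG1, Real.norm_eq_abs] using ha.abs

lemma norm_tsum_disj (G : ℕ → Lp ℝ 1 μ01) (hG1 : ∀ n, ‖G n‖ = 1)
    (hGd : ∀ m n : ℕ, m ≠ n → ∀ᵐ x ∂μ01, (G m : ℝ → ℝ) x = 0 ∨ (G n : ℝ → ℝ) x = 0)
    (a : ℕ → ℝ) (ha : Summable a) :
    ‖∑' n, a n • G n‖ = ∑' n, |a n| := by
  have hs : Summable (fun n => a n • G n) := summable_smul_G G hG1 a ha
  have h1 : Tendsto (fun s : Finset ℕ => ‖∑ n ∈ s, a n • G n‖) atTop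
      (𝓝 ‖∑' n, a n • G n‖) := hs.hasSum.norm
  have h2 : Tendsto (fun s : Finset ℕ => ∑ n ∈ s, |a n|) atTop (𝓝 (∑' n, |a n|)) :=
    ha.abs.hasSum
  have he : (fun s : Finset ℕ => ‖∑ n ∈ s, a n • G n‖)
      = fun s => ∑ n ∈ s, |a n| := funext fun s => norm_finsum_disj G hG1 hGd a s
  rw [he] at h1
  exact tendsto_nhds_unique h1 h2

lemma norm_pair_disj (G : ℕ → Lp ℝ 1 μ01) (hG1 : ∀ n, ‖G n‖ = 1)
    (hGd : ∀ m n : ℕ, m ≠ n → ∀ᵐ x ∂μ01, (G m : ℝ → ℝ) x = 0 ∨ (G n : ℝ → ℝ) x = 0)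
    (m n : ℕ) (hmn : m ≠ n) (a b : ℝ) :
    ‖a • G m + b • G n‖ = |a| + |b| := by
  have := norm_finsum_disj G hG1 hGd (fun k => if k = m then a else b) {m, n}
  rw [Finset.sum_pair hmn, Finset.sum_pair hmn] at this
  simpa [if_neg (Ne.symm hmn)] using this

set_option synthInstance.maxHeartbeats 1000000 in
set_option maxHeartbeats 1000000 in
/-- The shift map on `C_t` is uniformly `2/t`-Lipschitzian; the constant `2/t` is attained at
`f = (t-1)g₁`, `g = g₂` (with `‖f - g‖ = t` and `‖Tⁿf - Tⁿg‖ = 2 = (2/t)·‖f - g‖`), and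
`S(T) = liminf (|T| + ⋯ + |Tⁿ|)/n = 2/t`. -/
theorem shift_map_uniform_lipschitz_constant
    (g : ℕ → Lp ℝ 1 μ01) (hnorm : ∀ n, ‖g n‖ = 1)
    (hdisj : ∀ m n : ℕ, m ≠ n → ∀ᵐ x ∂μ01, (g m : ℝ → ℝ) x = 0 ∨ (g n : ℝ → ℝ) x = 0)
    (t : ℝ) (ht : t ∈ Set.Ioo (1 : ℝ) 2)
    (T : Lp ℝ 1 μ01 → Lp ℝ 1 μ01)
    (hT : ∀ s : ℕ → ℝ, (∀ n, 0 ≤ s n) → (∑' n, s n) = 1 →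
      T (((t - 1) * s 0) • g 0 + ∑' n : ℕ, s (n + 1) • g (n + 1)) =
        ∑' n : ℕ, s n • g (n + 1)) :
    (∀ n : ℕ, ∀ f ∈ Ct g t, ∀ h ∈ Ct g t,
      ‖T^[n] f - T^[n] h‖ ≤ (2 / t) * ‖f - h‖) ∧
    (t - 1) • g 0 ∈ Ct g t ∧ g 1 ∈ Ct g t ∧
    ‖(t - 1) • g 0 - g 1‖ = t ∧
    (∀ n : ℕ, 1 ≤ n →
      ‖T^[n] ((t - 1) • g 0) - T^[n] (g 1)‖ = 2 ∧
      (2 : ℝ) = (2 / t) * ‖(t - 1) • g 0 - g 1‖) ∧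
    liminf (fun n : ℕ => (∑ k ∈ Finset.Icc 1 n, exactLip g t T k) / n) atTop = 2 / t := by
  obtain ⟨ht1, ht2⟩ := ht
  have ht0 : (0:ℝ) < t := by linarith
  have hdisjk : ∀ k : ℕ, ∀ m n : ℕ, m ≠ n →
      ∀ᵐ x ∂μ01, (g (m+k) : ℝ → ℝ) x = 0 ∨ (g (n+k) : ℝ → ℝ) x = 0 :=
    fun k m n h => hdisj (m+k) (n+k) (by omega)
  have hsummable : ∀ s : ℕ → ℝ, (∑' n, s n) = 1 → Summable s := by
    intro s hs1
    by_contra h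
    rw [tsum_eq_zero_of_not_summable h] at hs1
    norm_num at hs1
  set A : (ℕ → ℝ) → ℕ → ℝ := fun s n => if n = 0 then (t-1) * s 0 else s n with hA
  have hA0 : ∀ s, A s 0 = (t-1) * s 0 := fun s => if_pos rfl
  have hAS : ∀ s n, A s (n+1) = s (n+1) := fun s n => if_neg (Nat.succ_ne_zero n)
  have hAsum : ∀ s : ℕ → ℝ, Summable s → Summable (A s) := by
    intro s hs
    rw [← summable_nat_add_iff 1]
    simp only [hAS]
    exact (summable_nat_add_iff 1).2 hs
  have helt : ∀ s : ℕ → ℝ, Summable s →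
      ((t - 1) * s 0) • g 0 + (∑' n : ℕ, s (n + 1) • g (n + 1)) = ∑' n, A s n • g n := by
    intro s hs
    rw [Summable.tsum_eq_zero_add (summable_smul_G g hnorm (A s) (hAsum s hs))]
    simp only [hA0, hAS]
  have hdiffnorm : ∀ s r : ℕ → ℝ, Summable s → Summable r →
      ‖(((t - 1) * s 0) • g 0 + ∑' n : ℕ, s (n + 1) • g (n + 1)) -
       (((t - 1) * r 0) • g 0 + ∑' n : ℕ, r (n + 1) • g (n + 1))‖
      = (t-1) * |s 0 - r 0| + ∑' n, |s (n+1) - r (n+1)| := by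
    intro s r hs hr
    rw [helt s hs, helt r hr]
    have hsub : (∑' n, A s n • g n) - (∑' n, A r n • g n)
        = ∑' n, (A s n - A r n) • g n := by
      rw [← Summable.tsum_sub (summable_smul_G g hnorm _ (hAsum s hs))
        (summable_smul_G g hnorm _ (hAsum r hr))]
      exact tsum_congr fun n => (sub_smul _ _ _).symm
    rw [hsub, norm_tsum_disj g hnorm hdisj _ ((hAsum s hs).sub (hAsum r hr)),
      Summable.tsum_eq_zero_add (((hAsum s hs).sub (hAsum r hr)).abs)]
    have he2 : (∑' n, |A s (n+1) - A r (n+1)|) = ∑' n, |s (n+1) - r (n+1)| :=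
      tsum_congr fun n => by rw [hAS, hAS]
    rw [he2, hA0, hA0, ← mul_sub, abs_mul, abs_of_pos (by linarith : (0:ℝ) < t - 1)]
  -- iteration
  have hiter : ∀ k : ℕ, 1 ≤ k → ∀ s : ℕ → ℝ, (∀ n, 0 ≤ s n) → (∑' n, s n) = 1 →
      T^[k] (((t - 1) * s 0) • g 0 + ∑' n : ℕ, s (n + 1) • g (n + 1))
        = ∑' m, s m • g (m + k) := by
    intro k hk
    induction k, hk using Nat.le_induction with
    | base =>
      intro s hs0 hs1
      rw [Function.iterate_one, hT s hs0 hs1]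
    | succ k hk ih =>
      intro s hs0 hs1
      have hs : Summable s := hsummable s hs1
      set s' : ℕ → ℝ := fun m => Nat.rec 0 (fun m _ => s m) m with hs'
      have hs'0 : s' 0 = 0 := rfl
      have hs'S : ∀ m, s' (m+1) = s m := fun m => rfl
      have hs'sum : Summable s' := by
        rw [← summable_nat_add_iff 1]
        simp only [hs'S]
        exact hs
      have hs'pos : ∀ n, 0 ≤ s' n := by
        intro n
        cases n with
        | zero => simp [hs'0]
        | succ m => rw [hs'S]; exact hs0 m
      have hs'1 : (∑' n, s' n) = 1 := by
        rw [Summable.tsum_eq_zero_add hs'sum]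
        simpa [hs'0, hs'S] using hs1
      have hTs : T (((t - 1) * s 0) • g 0 + ∑' n : ℕ, s (n + 1) • g (n + 1))
          = ((t - 1) * s' 0) • g 0 + ∑' n : ℕ, s' (n + 1) • g (n + 1) := by
        rw [hT s hs0 hs1, hs'0]
        simp only [hs'S]
        rw [mul_zero, zero_smul, zero_add]
      rw [Function.iterate_succ_apply, hTs, ih s' hs'pos hs'1,
        Summable.tsum_eq_zero_add (summable_smul_G (fun m => g (m+k)) (fun m => hnorm _) s' hs'sum)]
      simp only [hs'0, zero_smul, zero_add, hs'S]
      exact tsum_congr fun m => by rw [show m+1+k = m+(k+1) from by omega]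
  -- the two special points
  set d0 : ℕ → ℝ := fun n => if n = 0 then 1 else 0 with hd0
  set d1 : ℕ → ℝ := fun n => if n = 1 then 1 else 0 with hd1
  have hd0pos : ∀ n, 0 ≤ d0 n := fun n => by rw [hd0]; positivity
  have hd1pos : ∀ n, 0 ≤ d1 n := fun n => by rw [hd1]; positivity
  have hd0sum : (∑' n, d0 n) = 1 := tsum_ite_eq 0 1
  have hd1sum : (∑' n, d1 n) = 1 := tsum_ite_eq 1 1
  have hδ0 : (t - 1) • g 0 = ((t - 1) * d0 0) • g 0 + ∑' n : ℕ, d0 (n+1) • g (n+1) := by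
    have h1 : ∀ n : ℕ, d0 (n+1) • g (n+1) = 0 := fun n => by
      simp [hd0]
    simp [h1, tsum_zero, hd0]
  have hδ1 : g 1 = ((t - 1) * d1 0) • g 0 + ∑' n : ℕ, d1 (n+1) • g (n+1) := by
    have h1 : (∑' n : ℕ, d1 (n+1) • g (n+1)) = g 1 := by
      rw [tsum_eq_single 0 fun n hn => by simp [hd1, hn]]
      simp [hd1]
    have h0 : (t - 1) * d1 0 = 0 := by simp [hd1]
    rw [h0, zero_smul, zero_add, h1]
  have hmem0 : (t-1) • g 0 ∈ Ct g t := ⟨d0, hd0pos, hd0sum, hδ0⟩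
  have hmem1 : g 1 ∈ Ct g t := ⟨d1, hd1pos, hd1sum, hδ1⟩
  have hTiter0 : ∀ k, 1 ≤ k → T^[k] ((t-1) • g 0) = g k := by
    intro k hk
    rw [hδ0, hiter k hk d0 hd0pos hd0sum,
      tsum_eq_single 0 fun m hm => by simp [hd0, hm]]
    simp [hd0]
  have hTiter1 : ∀ k, 1 ≤ k → T^[k] (g 1) = g (1+k) := by
    intro k hk
    rw [hδ1, hiter k hk d1 hd1pos hd1sum,
      tsum_eq_single 1 fun m hm => by simp [hd1, hm]]
    simp [hd1]
  have hnt : ‖(t-1) • g 0 - g 1‖ = t := by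
    have heq : (t-1) • g 0 - g 1 = (t-1) • g 0 + (-1 : ℝ) • g 1 := by
      rw [neg_one_smul, sub_eq_add_neg]
    rw [heq, norm_pair_disj g hnorm hdisj 0 1 (by omega) _ _,
      abs_of_pos (by linarith : (0:ℝ) < t - 1)]
    simp
  have hn2 : ∀ k, 1 ≤ k → ‖T^[k] ((t-1) • g 0) - T^[k] (g 1)‖ = 2 := by
    intro k hk
    rw [hTiter0 k hk, hTiter1 k hk]
    have heq : g k - g (1+k) = (1:ℝ) • g k + (-1:ℝ) • g (1+k) := by
      rw [one_smul, neg_one_smul, sub_eq_add_neg]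
    rw [heq, norm_pair_disj g hnorm hdisj k (1+k) (by omega) 1 (-1)]
    norm_num
  -- Lipschitz bound
  have hlip : ∀ n : ℕ, ∀ f ∈ Ct g t, ∀ h ∈ Ct g t,
      ‖T^[n] f - T^[n] h‖ ≤ (2 / t) * ‖f - h‖ := by
    rintro n f ⟨s, hs0, hs1, rfl⟩ h ⟨r, hr0, hr1, rfl⟩
    have hs := hsummable s hs1
    have hr := hsummable r hr1
    have hAsummable : Summable (fun m => |s (m+1) - r (m+1)|) :=
      ((summable_nat_add_iff 1).2 (hs.sub hr)).abs
    have hdA : |s 0 - r 0| ≤ ∑' m, |s (m+1) - r (m+1)| := by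
      have h1 : (∑' n, s n) = s 0 + ∑' n, s (n+1) := Summable.tsum_eq_zero_add hs
      have h2 : (∑' n, r n) = r 0 + ∑' n, r (n+1) := Summable.tsum_eq_zero_add hr
      have h3 : s 0 - r 0 = ∑' n, (r (n+1) - s (n+1)) := by
        rw [Summable.tsum_sub ((summable_nat_add_iff 1).2 hr) ((summable_nat_add_iff 1).2 hs)]
        linarith
      calc |s 0 - r 0| = ‖∑' n, (r (n+1) - s (n+1))‖ := by rw [h3, Real.norm_eq_abs]
        _ ≤ ∑' n, ‖r (n+1) - s (n+1)‖ := norm_tsum_le_tsum_norm (by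
            simpa [Real.norm_eq_abs] using ((summable_nat_add_iff 1).2 (hr.sub hs)).abs)
        _ = ∑' m, |s (m+1) - r (m+1)| := tsum_congr fun n => by
            rw [Real.norm_eq_abs, abs_sub_comm]
    rw [hdiffnorm s r hs hr]
    rcases Nat.eq_zero_or_pos n with hn | hn
    · subst hn
      simp only [Function.iterate_zero, id_eq]
      rw [hdiffnorm s r hs hr]
      have h2t : 1 ≤ 2 / t := by rw [le_div_iff₀ ht0]; linarith
      nlinarith [abs_nonneg (s 0 - r 0), tsum_nonneg (L := SummationFilter.unconditional ℕ) (fun m : ℕ => abs_nonneg (s (m+1) - r (m+1))),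
        mul_nonneg (mul_nonneg (by linarith : (0:ℝ) ≤ t - 1) (abs_nonneg (s 0 - r 0)))
          (by linarith : (0:ℝ) ≤ 2/t - 1)]
    · rw [hiter n hn s hs0 hs1, hiter n hn r hr0 hr1]
      have hsub : (∑' m, s m • g (m+n)) - (∑' m, r m • g (m+n))
          = ∑' m, (s m - r m) • g (m+n) := by
        rw [← Summable.tsum_sub (summable_smul_G (fun m => g (m+n)) (fun m => hnorm _) s hs)
          (summable_smul_G (fun m => g (m+n)) (fun m => hnorm _) r hr)]
        exact tsum_congr fun m => (sub_smul _ _ _).symm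
      rw [hsub, norm_tsum_disj (fun m => g (m+n)) (fun m => hnorm _) (hdisjk n) _ (hs.sub hr),
        Summable.tsum_eq_zero_add (hs.sub hr).abs]
      rw [div_mul_eq_mul_div, le_div_iff₀ ht0]
      nlinarith [hdA, abs_nonneg (s 0 - r 0),
        mul_nonneg (by linarith : (0:ℝ) ≤ 2 - t)
          (by linarith [hdA] : (0:ℝ) ≤ (∑' m, |s (m+1) - r (m+1)|) - |s 0 - r 0|)]
  -- exact Lipschitz constants
  have hne : (t-1) • g 0 ≠ g 1 := by
    intro h
    have := hnt
    rw [h, sub_self, norm_zero] at this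
    linarith
  have hub : ∀ k : ℕ,
      ∀ q ∈ {q : ℝ | ∃ f ∈ Ct g t, ∃ h ∈ Ct g t, f ≠ h ∧ q = ‖T^[k] f - T^[k] h‖ / ‖f - h‖},
      q ≤ 2/t := by
    rintro k q ⟨f, hf, h, hh, hfh, rfl⟩
    have hpos : 0 < ‖f - h‖ := by
      rw [norm_pos_iff]
      exact sub_ne_zero.2 hfh
    rw [div_le_iff₀ hpos]
    exact hlip k f hf h hh
  have hexact : ∀ k, 1 ≤ k → exactLip g t T k = 2/t := by
    intro k hk
    have hmemq : (2/t) ∈ {q : ℝ | ∃ f ∈ Ct g t, ∃ h ∈ Ct g t, f ≠ h ∧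
        q = ‖T^[k] f - T^[k] h‖ / ‖f - h‖} :=
      ⟨(t-1) • g 0, hmem0, g 1, hmem1, hne, by rw [hn2 k hk, hnt]⟩
    exact le_antisymm (csSup_le ⟨_, hmemq⟩ (hub k)) (le_csSup ⟨2/t, hub k⟩ hmemq)
  refine ⟨hlip, hmem0, hmem1, hnt, fun n hn => ⟨hn2 n hn, by
    rw [hnt, div_mul_cancel₀ _ ht0.ne']⟩, ?_⟩
  have hev : ∀ᶠ n : ℕ in atTop,
      (∑ k ∈ Finset.Icc 1 n, exactLip g t T k) / (n : ℝ) = 2/t := by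
    filter_upwards [eventually_ge_atTop 1] with n hn
    rw [Finset.sum_congr rfl (fun k hk => hexact k (Finset.mem_Icc.1 hk).1),
      Finset.sum_const, Nat.card_Icc, Nat.add_sub_cancel, nsmul_eq_mul,
      mul_comm, mul_div_assoc, div_self (by exact_mod_cast (by omega : n ≠ 0) : (n:ℝ) ≠ 0), mul_one]
  rw [liminf_congr hev, liminf_const]
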